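/- (Mehler–Heine scaling asymptotics.) For every ψ ∈ ℝ, lim_{ℓ→∞} P_ℓ( cos(ψ/ℓ) ) = J₀(ψ), where J₀(ψ) := ∑_{k=0}^∞ (−1)^k (ψ/2)^{2k} / (k!)² is the Bessel function of the first kind of order zero, and P_ℓ is the ℓ-th Legendre polynomial. -/

import Mathlib

open MeasureTheory Real Filter
open scoped ENNReal NNReal

noncomputable section

/-- The ℓ-th Legendre polynomial, via Rodrigues' formula
`P_ℓ(t) = (1/(2^ℓ ℓ!)) (d/dt)^ℓ (t²−1)^ℓ`. -/
def legendreP (ℓ : ℕ) (t : ℝ) : ℝ :=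
  (1 / (2 ^ ℓ * (Nat.factorial ℓ : ℝ))) * iteratedDeriv ℓ (fun s => (s ^ 2 - 1) ^ ℓ) t

/-- The Bessel function of the first kind of order zero,
`J₀(ψ) = ∑_k (−1)^k (ψ/2)^{2k} / (k!)²`. -/
def besselJ0 (ψ : ℝ) : ℝ :=
  ∑' k : ℕ, (-1 : ℝ) ^ k * (ψ / 2) ^ (2 * k) / ((Nat.factorial k : ℝ) ^ 2)

open Polynomial Finset in
lemma iteratedDeriv_poly (n : ℕ) (p : ℝ[X]) :
    iteratedDeriv n (fun x => p.eval x) = fun x => (derivative^[n] p).eval x := by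
  induction n with
  | zero => simp
  | succ n ih =>
      rw [iteratedDeriv_succ, ih, Function.iterate_succ_apply']
      funext x
      exact Polynomial.deriv _

open Polynomial Finset in
lemma legendreP_eq_sum (ℓ : ℕ) (t : ℝ) :
    legendreP ℓ t = ∑ k ∈ range (ℓ + 1),
      (ℓ.choose k : ℝ) ^ 2 * ((t - 1) / 2) ^ k * ((t + 1) / 2) ^ (ℓ - k) := by
  have hfun : (fun s : ℝ => (s ^ 2 - 1) ^ ℓ)
      = fun s => (((X - C 1) * (X + C 1) : ℝ[X]) ^ ℓ).eval s := by
    funext s; simp; ring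
  rw [legendreP, hfun, iteratedDeriv_poly, mul_pow, Polynomial.iterate_derivative_mul]
  simp only [Polynomial.iterate_derivative_X_sub_pow, Polynomial.iterate_derivative_X_add_pow,
    smul_mul_assoc, mul_smul_comm, Polynomial.eval_finset_sum, Polynomial.eval_smul,
    Polynomial.eval_mul, Polynomial.eval_pow, Polynomial.eval_sub, Polynomial.eval_add,
    Polynomial.eval_X, Polynomial.eval_one, Polynomial.eval_C, smul_eq_mul]
  rw [Finset.mul_sum]
  refine Finset.sum_congr rfl fun k hk => ?_
  have hk' : k ≤ ℓ := by simpa using Nat.lt_succ_iff.mp (Finset.mem_range.mp hk)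
  have hnat : (ℓ.choose k) * (ℓ.descFactorial (ℓ - k)) * (ℓ.descFactorial k)
      = ℓ.choose k ^ 2 * ℓ.factorial := by
    rw [Nat.descFactorial_eq_factorial_mul_choose, Nat.descFactorial_eq_factorial_mul_choose,
      Nat.choose_symm hk']
    have := Nat.choose_mul_factorial_mul_factorial hk'
    ring_nf
    ring_nf at this
    nlinarith [this]
  have hsub : ℓ - (ℓ - k) = k := Nat.sub_sub_self hk'
  rw [hsub]
  have h2 : (2:ℝ)^ℓ = 2^k * 2^(ℓ-k) := by rw [← pow_add, Nat.add_sub_cancel' hk']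
  have hfac : (0:ℝ) < ℓ.factorial := by positivity
  have hcast : ((ℓ.choose k : ℝ)) * (ℓ.descFactorial (ℓ - k) : ℝ) * (ℓ.descFactorial k : ℝ)
      = (ℓ.choose k : ℝ)^2 * (ℓ.factorial : ℝ) := by exact_mod_cast congrArg (Nat.cast (R := ℝ)) hnat
  field_simp
  rw [h2]
  have hA : ((t-1)/2)^k * (2:ℝ)^k = (t-1)^k := by rw [div_pow]; field_simp
  have hB : ((t+1)/2)^(ℓ-k) * (2:ℝ)^(ℓ-k) = (t+1)^(ℓ-k) := by rw [div_pow]; field_simp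
  linear_combination ((t-1)^k*(t+1)^(ℓ-k)) * hcast
    - ((ℓ.choose k : ℝ)^2 * (ℓ.factorial : ℝ) * (((t+1)/2)^(ℓ-k) * (2:ℝ)^(ℓ-k))) * hA
    - ((ℓ.choose k : ℝ)^2 * (ℓ.factorial : ℝ) * (t-1)^k) * hB

set_option maxHeartbeats 1000000 in
/-- Mehler–Heine asymptotics: `P_ℓ(cos(ψ/ℓ)) → J₀(ψ)` as `ℓ → ∞`. -/
theorem mehler_heine (ψ : ℝ) :
    Tendsto (fun ℓ : ℕ => legendreP ℓ (Real.cos (ψ / (ℓ : ℝ)))) atTop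
      (nhds (besselJ0 ψ)) := by
  classical
  set g : ℕ → ℝ := fun k => (-1 : ℝ) ^ k * (ψ / 2) ^ (2 * k) / ((Nat.factorial k : ℝ) ^ 2) with hgdef
  set f : ℕ → ℕ → ℝ := fun ℓ j => if j ≤ ℓ then
      (ℓ.choose j : ℝ) ^ 2 * ((Real.cos (ψ/(ℓ:ℝ)) - 1) / 2) ^ j
        * ((Real.cos (ψ/(ℓ:ℝ)) + 1) / 2) ^ (ℓ - j) else 0 with hfdef
  -- half-angle identities
  have e1 : ∀ ℓ : ℕ, (Real.cos (ψ/(ℓ:ℝ)) - 1) / 2 = -(Real.sin (ψ/(ℓ:ℝ)/2) ^ 2) := by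
    intro ℓ
    have h := Real.sin_sq_eq_half_sub (ψ/(ℓ:ℝ)/2)
    rw [show 2*(ψ/(ℓ:ℝ)/2) = ψ/(ℓ:ℝ) by ring] at h
    linarith
  have e2 : ∀ ℓ : ℕ, (Real.cos (ψ/(ℓ:ℝ)) + 1) / 2 = Real.cos (ψ/(ℓ:ℝ)/2) ^ 2 := by
    intro ℓ
    have h := Real.cos_sq (ψ/(ℓ:ℝ)/2)
    rw [show 2*(ψ/(ℓ:ℝ)/2) = ψ/(ℓ:ℝ) by ring] at h
    linarith
  have hLeg : (fun ℓ : ℕ => legendreP ℓ (Real.cos (ψ/(ℓ:ℝ)))) = fun ℓ => ∑' j : ℕ, f ℓ j := by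
    funext ℓ
    rw [legendreP_eq_sum,
      tsum_eq_sum (s := Finset.range (ℓ+1)) (f := fun j => f ℓ j)
        (by intro b hb
            simp only [Finset.mem_range, not_lt] at hb
            simp only [hfdef]
            rw [if_neg (by omega)])]
    refine Finset.sum_congr rfl fun k hk => ?_
    have hk' : k ≤ ℓ := Nat.lt_succ_iff.mp (Finset.mem_range.mp hk)
    simp only [hfdef]
    rw [if_pos hk']
  rw [hLeg, show besselJ0 ψ = ∑' j : ℕ, g j from rfl]
  have hboundnn : ∀ j : ℕ, (0:ℝ) ≤ (ψ/2)^(2*j) / ((j.factorial : ℝ)^2) := by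
    intro j
    apply div_nonneg _ (sq_nonneg _)
    rw [pow_mul]
    positivity
  refine tendsto_tsum_of_dominated_convergence (f := f) (g := g)
    (bound := fun j : ℕ => (ψ/2)^(2*j) / ((j.factorial : ℝ)^2)) ?_ ?_ ?_
  · -- summability of the bound
    refine Summable.of_nonneg_of_le hboundnn (f := fun j => ((ψ/2)^2)^j / (j.factorial : ℝ)) ?_
      (Real.summable_pow_div_factorial ((ψ/2)^2))
    intro j
    rw [pow_mul]
    have h1 : (1:ℝ) ≤ (j.factorial : ℝ) := by exact_mod_cast Nat.one_le_iff_ne_zero.mpr j.factorial_ne_zero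
    have h2 : (j.factorial : ℝ) ≤ (j.factorial : ℝ)^2 := by nlinarith
    exact div_le_div_of_nonneg_left (by positivity) (by positivity) h2
  · -- pointwise limits
    intro j
    -- h1
    have h1 : Tendsto (fun ℓ : ℕ => (ℓ.choose j : ℝ) / (ℓ:ℝ)^j) atTop
        (nhds (1 / (j.factorial : ℝ))) := by
      have hd : Tendsto (fun ℓ : ℕ => (ℓ.descFactorial j : ℝ) / (ℓ:ℝ)^j) atTop (nhds 1) := by
        have heq : (fun ℓ : ℕ => (ℓ.descFactorial j : ℝ) / (ℓ:ℝ)^j)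
            =ᶠ[atTop] fun ℓ : ℕ => ∏ i ∈ Finset.range j, (1 - (i:ℝ)/(ℓ:ℝ)) := by
          filter_upwards [eventually_ge_atTop (max 1 j)] with ℓ hℓ
          have hℓj : j ≤ ℓ := le_trans (le_max_right _ _) hℓ
          have hℓ0 : ((ℓ:ℝ)) ≠ 0 := by
            have : 1 ≤ ℓ := le_trans (le_max_left _ _) hℓ
            positivity
          rw [Nat.descFactorial_eq_prod_range, Nat.cast_prod,
            show ((ℓ:ℝ))^j = ∏ _i ∈ Finset.range j, (ℓ:ℝ) by
              rw [Finset.prod_const, Finset.card_range],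
            ← Finset.prod_div_distrib]
          refine Finset.prod_congr rfl fun i hi => ?_
          have hij : i ≤ ℓ := le_trans (le_of_lt (Finset.mem_range.mp hi)) hℓj
          rw [Nat.cast_sub hij, sub_div, div_self hℓ0]
        have hlim : Tendsto (fun ℓ : ℕ => ∏ i ∈ Finset.range j, (1 - (i:ℝ)/(ℓ:ℝ))) atTop
            (nhds (∏ _i ∈ Finset.range j, (1:ℝ))) := by
          refine tendsto_finset_prod _ fun i _ => ?_
          simpa using ((tendsto_const_div_atTop_nhds_zero_nat (i:ℝ)).const_sub 1)
        rw [Finset.prod_const_one] at hlim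
        exact Tendsto.congr' heq.symm hlim
      have h' : Tendsto (fun ℓ : ℕ => (ℓ.descFactorial j : ℝ) / (ℓ:ℝ)^j * (1/(j.factorial:ℝ)))
          atTop (nhds (1 * (1/(j.factorial:ℝ)))) := hd.mul_const _
      rw [one_mul] at h'
      refine h'.congr fun ℓ => ?_
      have hjf : ((j.factorial : ℝ)) ≠ 0 := by positivity
      rw [Nat.descFactorial_eq_factorial_mul_choose]
      push_cast
      rw [div_mul_div_comm, mul_one, mul_comm ((ℓ:ℝ)^j) ((j.factorial:ℝ))]
      exact mul_div_mul_left _ _ hjf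
    -- h2
    have h2 : Tendsto (fun ℓ : ℕ => (ℓ:ℝ) * Real.sin (ψ/(ℓ:ℝ)/2)) atTop (nhds (ψ/2)) := by
      by_cases hψ : ψ = 0
      · subst hψ; simpa using tendsto_const_nhds (α := ℕ) (f := atTop) (a := (0:ℝ))
      · have hslope : Tendsto (fun y : ℝ => Real.sin y / y) (nhdsWithin 0 {(0:ℝ)}ᶜ)
            (nhds 1) := by
          have h := (Real.hasDerivAt_sin 0)
          rw [hasDerivAt_iff_tendsto_slope] at h
          simp only [Real.cos_zero] at h
          refine h.congr fun y => ?_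
          simp [slope_def_field, div_eq_mul_inv]
        have hx0 : Tendsto (fun ℓ : ℕ => ψ/(ℓ:ℝ)/2) atTop (nhds 0) := by
          simpa using ((tendsto_const_div_atTop_nhds_zero_nat ψ).div_const 2)
        have hx : Tendsto (fun ℓ : ℕ => ψ/(ℓ:ℝ)/2) atTop (nhdsWithin 0 {(0:ℝ)}ᶜ) := by
          rw [tendsto_nhdsWithin_iff]
          refine ⟨hx0, ?_⟩
          filter_upwards [eventually_ge_atTop 1] with ℓ hℓ
          have : ((ℓ:ℝ)) ≠ 0 := by positivity
          simp only [Set.mem_compl_iff, Set.mem_singleton_iff]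
          exact div_ne_zero (div_ne_zero hψ this) two_ne_zero
        have hcomp := hslope.comp hx
        have h' := hcomp.const_mul (ψ/2)
        rw [mul_one] at h'
        refine h'.congr' ?_
        filter_upwards [eventually_ge_atTop 1] with ℓ hℓ
        have hℓ0 : ((ℓ:ℝ)) ≠ 0 := by positivity
        have hxne : ψ/(ℓ:ℝ)/2 ≠ 0 := div_ne_zero (div_ne_zero hψ hℓ0) two_ne_zero
        simp only [Function.comp_apply]
        field_simp
    -- h3
    have h3 : Tendsto (fun ℓ : ℕ => Real.cos (ψ/(ℓ:ℝ)/2) ^ (2*(ℓ-j))) atTop (nhds 1) := by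
      have hx0 : Tendsto (fun ℓ : ℕ => ψ/(ℓ:ℝ)/2) atTop (nhds 0) := by
        simpa using ((tendsto_const_div_atTop_nhds_zero_nat ψ).div_const 2)
      have hlow : Tendsto (fun ℓ : ℕ => 1 - (ψ^2/4)/(ℓ:ℝ)) atTop (nhds 1) := by
        have h := ((tendsto_const_div_atTop_nhds_zero_nat (ψ^2/4)).const_sub (1:ℝ))
        rwa [sub_zero] at h
      refine tendsto_of_tendsto_of_tendsto_of_le_of_le' hlow tendsto_const_nhds ?_ ?_
      · filter_upwards [eventually_ge_atTop 1,
          (NormedAddCommGroup.tendsto_nhds_zero.mp hx0 1 one_pos)] with ℓ hℓ hx1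
        set x := ψ/(ℓ:ℝ)/2 with hxdef
        have hℓ0 : ((ℓ:ℝ)) ≠ 0 := by positivity
        have hx1' : |x| ≤ 1 := le_of_lt (by simpa using hx1)
        have hxsq : x^2 ≤ 1 := by
          rw [← sq_abs]; exact pow_le_one₀ (abs_nonneg x) hx1'
        have hc1 : 1 - x^2/2 ≤ Real.cos x := Real.one_sub_sq_div_two_le_cos
        have h0 : (0:ℝ) ≤ 1 - x^2/2 := by nlinarith
        calc 1 - (ψ^2/4)/(ℓ:ℝ) = 1 + (2*ℓ:ℕ) * (-(x^2)/2) := by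
              push_cast
              rw [hxdef]
              field_simp
              ring
          _ ≤ (1 + (-(x^2)/2))^(2*ℓ) := one_add_mul_le_pow (by nlinarith) _
          _ = (1 - x^2/2)^(2*ℓ) := by ring_nf
          _ ≤ (1 - x^2/2)^(2*(ℓ-j)) := by
              refine pow_le_pow_of_le_one h0 (by nlinarith) (by omega)
          _ ≤ Real.cos x ^ (2*(ℓ-j)) := pow_le_pow_left₀ h0 hc1 _
      · filter_upwards with ℓ
        rw [pow_mul]
        exact pow_le_one₀ (sq_nonneg _) (Real.cos_sq_le_one _)
    -- combine
    have hcomb : Tendsto (fun ℓ : ℕ => (-1:ℝ)^j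
        * ((ℓ.choose j : ℝ)/(ℓ:ℝ)^j * ((ℓ:ℝ) * Real.sin (ψ/(ℓ:ℝ)/2))^j)^2
        * Real.cos (ψ/(ℓ:ℝ)/2) ^ (2*(ℓ-j))) atTop
        (nhds ((-1:ℝ)^j * (1/(j.factorial:ℝ) * (ψ/2)^j)^2 * 1)) :=
      (((h1.mul (h2.pow j)).pow 2).const_mul _).mul h3
    have hval : (-1:ℝ)^j * (1/(j.factorial:ℝ) * (ψ/2)^j)^2 * 1 = g j := by
      simp only [hgdef]
      ring
    rw [hval] at hcomb
    refine hcomb.congr' ?_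
    filter_upwards [eventually_ge_atTop (max 1 j)] with ℓ hℓ
    have hℓ1 : 1 ≤ ℓ := le_trans (le_max_left _ _) hℓ
    have hℓj : j ≤ ℓ := le_trans (le_max_right _ _) hℓ
    have hℓ0 : ((ℓ:ℝ)) ≠ 0 := by positivity
    have hℓj0 : ((ℓ:ℝ))^j ≠ 0 := pow_ne_zero _ hℓ0
    simp only [hfdef]
    rw [if_pos hℓj, e1 ℓ, e2 ℓ]
    set s := Real.sin (ψ/(ℓ:ℝ)/2)
    set c := Real.cos (ψ/(ℓ:ℝ)/2)
    have key : ((ℓ.choose j : ℝ)/(ℓ:ℝ)^j) * ((ℓ:ℝ)*s)^j = (ℓ.choose j : ℝ) * s^j := by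
      rw [mul_pow]
      field_simp
    rw [key, neg_pow, pow_mul c]
    ring
  · -- domination
    filter_upwards [eventually_ge_atTop 1] with ℓ hℓ1
    intro j
    by_cases hj : j ≤ ℓ
    · have hℓ0 : ((ℓ:ℝ)) ≠ 0 := by positivity
      have hjf : (0:ℝ) < (j.factorial : ℝ) := by positivity
      simp only [hfdef]
      rw [if_pos hj, e1 ℓ, e2 ℓ, Real.norm_eq_abs]
      obtain ⟨x, hx⟩ : ∃ x' : ℝ, x' = ψ/(ℓ:ℝ)/2 := ⟨_, rfl⟩
      obtain ⟨s, hs⟩ : ∃ s' : ℝ, s' = Real.sin (ψ/(ℓ:ℝ)/2) := ⟨_, rfl⟩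
      obtain ⟨c, hc⟩ : ∃ c' : ℝ, c' = Real.cos (ψ/(ℓ:ℝ)/2) := ⟨_, rfl⟩
      rw [← hs, ← hc]
      have hs2 : s^2 ≤ x^2 := by rw [hs, hx]; exact Real.sin_sq_le_sq
      have hc2 : (c^2)^(ℓ-j) ≤ 1 := by
        rw [hc]; exact pow_le_one₀ (sq_nonneg _) (Real.cos_sq_le_one _)
      have hch : (ℓ.choose j : ℝ) ≤ (ℓ:ℝ)^j / (j.factorial:ℝ) := by
        rw [le_div_iff₀ hjf]
        have hle := Nat.descFactorial_le_pow ℓ j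
        have h := Nat.descFactorial_eq_factorial_mul_choose ℓ j
        have h2 : (ℓ.choose j) * j.factorial ≤ ℓ^j := by rw [mul_comm, ← h]; exact hle
        exact_mod_cast h2
      calc |(ℓ.choose j : ℝ)^2 * (-(s^2))^j * (c^2)^(ℓ-j)|
          = (ℓ.choose j : ℝ)^2 * (s^2)^j * (c^2)^(ℓ-j) := by
            rw [abs_mul, abs_mul, neg_pow, abs_mul]
            rw [abs_of_nonneg (by positivity : (0:ℝ) ≤ (ℓ.choose j : ℝ)^2),
              abs_of_nonneg (by positivity : (0:ℝ) ≤ ((s:ℝ)^2)^j),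
              abs_of_nonneg (by positivity : (0:ℝ) ≤ ((c:ℝ)^2)^(ℓ-j))]
            rw [abs_pow, abs_neg, abs_one, one_pow]
            ring
        _ ≤ ((ℓ:ℝ)^j / (j.factorial:ℝ))^2 * (x^2)^j * 1 := by
            gcongr
        _ = (((ℓ:ℝ) * x)^j / (j.factorial:ℝ))^2 := by
            rw [mul_one]
            ring
        _ = (ψ/2)^(2*j) / ((j.factorial:ℝ)^2) := by
            rw [show (ℓ:ℝ) * x = ψ/2 by rw [hx]; field_simp]
            rw [div_pow, ← pow_mul, mul_comm j 2]
    · simp only [hfdef]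
      rw [if_neg hj]
      simpa using hboundnn j
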